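/- arXiv:1801.07996 — 3 statements merged into one kernel-verified Lean document; each statement's English description precedes it below -/
import Mathlib

section
/- For two non-antipodal points p, q on the unit sphere S^{n+1}, the map τ_p^q : v ↦ v − (⟨v, q⟩/(1 + ⟨q, p⟩))(q + p) from the tangent space at p to the tangent space at q is a linear isometry, and its composition with τ_q^p (defined symmetrically) is the identity on the tangent space at p. -/
open scoped RealInnerProductSpace

theorem parallel_transport_linear_isometry_and_inverse
    {n : ℕ} (p q : EuclideanSpace ℝ (Fin (n + 2)))
    (hp : ‖p‖ = 1) (hq : ‖q‖ = 1) (hpq : ⟪p, q⟫ ≠ -1) :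
    -- τ_p^q and τ_q^p
    (fun τpq τqp =>
      -- τ_p^q maps T_pS into T_qS
      (∀ v : EuclideanSpace ℝ (Fin (n + 2)), ⟪v, p⟫ = 0 → ⟪τpq v, q⟫ = 0) ∧
      -- linearity
      (∀ v w : EuclideanSpace ℝ (Fin (n + 2)), τpq (v + w) = τpq v + τpq w) ∧
      (∀ (a : ℝ) (v : EuclideanSpace ℝ (Fin (n + 2))), τpq (a • v) = a • τpq v) ∧
      -- isometry
      (∀ v : EuclideanSpace ℝ (Fin (n + 2)), ⟪v, p⟫ = 0 → ‖τpq v‖ = ‖v‖) ∧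
      -- τ_q^p ∘ τ_p^q is the identity on T_pS
      (∀ v : EuclideanSpace ℝ (Fin (n + 2)), ⟪v, p⟫ = 0 → τqp (τpq v) = v))
    (fun v => v - (⟪v, q⟫ / (1 + ⟪q, p⟫)) • (q + p))
    (fun v => v - (⟪v, p⟫ / (1 + ⟪p, q⟫)) • (p + q)) := by
  have hpp : ⟪p, p⟫ = 1 := by
    rw [real_inner_self_eq_norm_sq, hp]; norm_num
  have hqq : ⟪q, q⟫ = 1 := by
    rw [real_inner_self_eq_norm_sq, hq]; norm_num
  have hqp : ⟪q, p⟫ = ⟪p, q⟫ := (real_inner_comm q p).symm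
  have hden : 1 + ⟪q, p⟫ ≠ 0 := by
    rw [hqp]
    intro h
    apply hpq
    linarith
  have hden' : 1 + ⟪p, q⟫ ≠ 0 := by rwa [← hqp]
  refine ⟨?_, ?_, ?_, ?_, ?_⟩
  · intro v hv
    simp only [inner_sub_left, real_inner_smul_left, inner_add_left, hqq, hqp]
    set s := ⟪p, q⟫
    set a := ⟪v, q⟫
    field_simp
    ring
  · intro v w
    simp only [inner_add_left, add_div, add_smul]
    abel
  · intro a v
    simp only [real_inner_smul_left, mul_div_assoc, mul_smul, smul_sub]
  · intro v hv
    have key : ⟪v - (⟪v, q⟫ / (1 + ⟪q, p⟫)) • (q + p),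
        v - (⟪v, q⟫ / (1 + ⟪q, p⟫)) • (q + p)⟫ = ⟪v, v⟫ := by
      simp only [inner_sub_left, inner_sub_right, real_inner_smul_left,
        real_inner_smul_right, inner_add_left, inner_add_right, hqq, hpp, hqp,
        real_inner_comm v q, real_inner_comm v p, hv]
      set s := ⟪p, q⟫
      set a := ⟪v, q⟫
      field_simp
      ring
    have h1 := norm_eq_sqrt_real_inner
      (v - (⟪v, q⟫ / (1 + ⟪q, p⟫)) • (q + p))
    have h2 := norm_eq_sqrt_real_inner v
    rw [h1, h2, key]
  · intro v hv
    have h1 : ⟪v - (⟪v, q⟫ / (1 + ⟪q, p⟫)) • (q + p), p⟫ = -⟪v, q⟫ := by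
      simp only [inner_sub_left, real_inner_smul_left, inner_add_left, hpp, hqp, hv]
      set s := ⟪p, q⟫
      set a := ⟪v, q⟫
      field_simp
      ring
    simp only [h1]
    have : (-⟪v, q⟫ / (1 + ⟪p, q⟫)) • (p + q) = -((⟪v, q⟫ / (1 + ⟪q, p⟫)) • (q + p)) := by
      rw [hqp, add_comm q p, neg_div, neg_smul]
    rw [this]
    abel
end

section
/- Let m be a symmetric traceless 3×3 real matrix with tr(m²) = 6. Then −1 ≤ det(m)/2 ≤ 1, with equality det(m)/2 = ±1 attained exactly when the eigenvalues of m are a permutation of (∓1, ∓1, ±2). -/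
open Matrix

lemma each_bound' (a b c : ℝ) (h1 : a+b+c=0) (h2 : a^2+b^2+c^2=6) : a ≤ 2 ∧ -2 ≤ a := by
  have hbc : (b+c)^2 = a^2 := by rw [show b + c = -a by linarith]; ring
  have h4 : a^2 ≤ 4 := by nlinarith [sq_nonneg (b-c), hbc]
  constructor <;> nlinarith [h4]

lemma alg_bound' (a b c : ℝ) (h1 : a+b+c=0) (h2 : a^2+b^2+c^2=6) :
    -2 ≤ a*b*c ∧ a*b*c ≤ 2 := by
  obtain ⟨ha1, ha2⟩ := each_bound' a b c h1 h2
  obtain ⟨hb1, hb2⟩ := each_bound' b a c (by linarith) (by linarith)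
  obtain ⟨hc1, hc2⟩ := each_bound' c a b (by linarith) (by linarith)
  constructor
  · nlinarith [mul_nonneg (mul_nonneg (by linarith : (0:ℝ) ≤ 2+a) (by linarith : (0:ℝ) ≤ 2+b)) (by linarith : (0:ℝ) ≤ 2+c)]
  · nlinarith [mul_nonneg (mul_nonneg (by linarith : (0:ℝ) ≤ 2-a) (by linarith : (0:ℝ) ≤ 2-b)) (by linarith : (0:ℝ) ≤ 2-c)]

lemma alg_root' (a b c : ℝ) (h1 : a+b+c=0) (h2 : a^2+b^2+c^2=6) (h3 : a*b*c = 2) :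
    a = -1 ∨ a = 2 := by
  have key : (a-2)*(a+1)^2 = 0 := by
    linear_combination (a^2 - a/2*(a+b+c)) * h1 + (a/2) * h2 + h3
  rcases mul_eq_zero.mp key with h | h
  · right; linarith
  · left; have := pow_eq_zero_iff (n := 2) (by norm_num) |>.mp h; linarith

lemma triple_char (f : Fin 3 → ℝ) (h1 : f 0 + f 1 + f 2 = 0)
    (h2 : (f 0)^2 + (f 1)^2 + (f 2)^2 = 6) (h3 : f 0 * f 1 * f 2 = 2) :
    ∃ σ : Equiv.Perm (Fin 3), f ∘ σ = ![-1, -1, 2] := by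
  have ha := alg_root' (f 0) (f 1) (f 2) h1 h2 h3
  have hb := alg_root' (f 1) (f 0) (f 2) (by linarith) (by linarith) (by linarith [h3]; )
  have hc := alg_root' (f 2) (f 0) (f 1) (by linarith) (by linarith) (by nlinarith [h3])
  rcases ha with ha | ha <;> rcases hb with hb | hb <;> rcases hc with hc | hc
  · exfalso; rw [ha, hb, hc] at h1; norm_num at h1
  · exact ⟨1, by funext i; fin_cases i <;> simp [ha, hb, hc]⟩
  · exact ⟨Equiv.swap 1 2, by funext i; fin_cases i <;> simp [Equiv.swap_apply_def, ha, hb, hc]⟩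
  · exfalso; rw [ha, hb, hc] at h1; norm_num at h1
  · exact ⟨Equiv.swap 0 2, by funext i; fin_cases i <;> simp [Equiv.swap_apply_def, ha, hb, hc]⟩
  · exfalso; rw [ha, hb, hc] at h1; norm_num at h1
  · exfalso; rw [ha, hb, hc] at h1; norm_num at h1
  · exfalso; rw [ha, hb, hc] at h1; norm_num at h1

theorem det_bound_traceless_symmetric
    (m : Matrix (Fin 3) (Fin 3) ℝ) (hm : m.IsHermitian)
    (htr : m.trace = 0) (htr2 : (m * m).trace = 6) :
    (-1 ≤ m.det / 2 ∧ m.det / 2 ≤ 1) ∧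
      (m.det / 2 = 1 ↔ ∃ σ : Equiv.Perm (Fin 3), hm.eigenvalues ∘ σ = ![-1, -1, 2]) ∧
      (m.det / 2 = -1 ↔ ∃ σ : Equiv.Perm (Fin 3), hm.eigenvalues ∘ σ = ![1, 1, -2]) := by
  set f := hm.eigenvalues with hf
  have hU := (Matrix.mem_unitaryGroup_iff').mp (hm.eigenvectorUnitary).2
  have hdet : m.det = f 0 * f 1 * f 2 := by
    have := hm.det_eq_prod_eigenvalues
    simpa [Fin.prod_univ_three, mul_assoc] using this
  have hsum : f 0 + f 1 + f 2 = 0 := by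
    have : m.trace = ∑ i, f i := by
      conv_lhs => rw [hm.spectral_theorem, Unitary.conjStarAlgAut_apply]
      rw [Matrix.trace_mul_cycle, hU, one_mul, Matrix.trace_diagonal]
      simp [hf]
    rw [htr] at this
    simpa [Fin.sum_univ_three] using this.symm
  have hsq : (f 0)^2 + (f 1)^2 + (f 2)^2 = 6 := by
    have : (m*m).trace = ∑ i, (f i)^2 := by
      conv_lhs => rw [hm.spectral_theorem, Unitary.conjStarAlgAut_apply]
      rw [show ∀ U D Us : Matrix (Fin 3) (Fin 3) ℝ, (U*D*Us)*(U*D*Us) = U*(D*(Us*U)*D)*Us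
          from fun _ _ _ => by simp only [mul_assoc]]
      rw [hU, mul_one, Matrix.trace_mul_cycle, hU, one_mul, Matrix.diagonal_mul_diagonal,
        Matrix.trace_diagonal]
      simp [pow_two, hf]
    rw [htr2] at this
    simpa [Fin.sum_univ_three] using this.symm
  obtain ⟨hlb, hub⟩ := alg_bound' (f 0) (f 1) (f 2) hsum hsq
  rw [hdet] at *
  refine ⟨⟨by linarith, by linarith⟩, ⟨?_, ?_⟩, ?_, ?_⟩
  · intro h
    exact triple_char f hsum hsq (by linarith)
  · rintro ⟨σ, hσ⟩
    have hp : ∏ i, f (σ i) = f 0 * f 1 * f 2 := by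
      rw [Equiv.prod_comp σ f, Fin.prod_univ_three]
    have hp2 : ∏ i, f (σ i) = 2 := by
      have : ∀ i, f (σ i) = ![(-1:ℝ), -1, 2] i := fun i => congrFun hσ i
      rw [Fin.prod_univ_three, this 0, this 1, this 2]; norm_num; rfl
    rw [hp2] at hp; rw [← hp]; norm_num
  · intro h
    have := triple_char (fun i => -f i) (by linarith) (by simp; linarith)
      (by simp; nlinarith)
    obtain ⟨σ, hσ⟩ := this
    refine ⟨σ, funext fun i => ?_⟩
    have := congrFun hσ i
    simp only [Function.comp_apply] at this ⊢
    fin_cases i <;> simp_all <;> linarith [this]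
  · rintro ⟨σ, hσ⟩
    have hp : ∏ i, f (σ i) = f 0 * f 1 * f 2 := by
      rw [Equiv.prod_comp σ f, Fin.prod_univ_three]
    have hp2 : ∏ i, f (σ i) = -2 := by
      have : ∀ i, f (σ i) = ![(1:ℝ), 1, -2] i := fun i => congrFun hσ i
      rw [Fin.prod_univ_three, this 0, this 1, this 2]; norm_num; rfl
    rw [hp2] at hp; rw [← hp]; norm_num
end

section
/- For 0 < r < 1 and s = √(1 − r²), the numbers λ₁ = −s/r and λ₂ = r/s satisfy: there exists r ∈ (0,1) and ε ∈ (0, √2 − 1) such that min(|λ₁|, |λ₂|) > ε · tan(R/2) where cos R = min{r, s}, demonstrating that weakening the curvature bound of the sphere rigidity theorem by a factor ε < √2 − 1 admits the non-spherical counterexample S¹(r) × S^{n−1}(s). -/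
theorem clifford_counterexample_to_weakened_bound :
    ∃ r : ℝ, 0 < r ∧ r < 1 ∧
      ∃ ε : ℝ, 0 < ε ∧ ε < Real.sqrt 2 - 1 ∧
        min (Real.sqrt (1 - r ^ 2) / r) (r / Real.sqrt (1 - r ^ 2)) >
          ε * Real.tan (Real.arccos (min r (Real.sqrt (1 - r ^ 2))) / 2) := by
  have hpos : (0:ℝ) < Real.sqrt 2 := by positivity
  have hsq : Real.sqrt 2 ^ 2 = 2 := Real.sq_sqrt (by norm_num)
  have h2 : (1.4 : ℝ) < Real.sqrt 2 := by nlinarith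
  have hlt2 : Real.sqrt 2 < 2 := by nlinarith
  have hr : (1 : ℝ) - (Real.sqrt 2 / 2) ^ 2 = 1/2 := by
    field_simp; nlinarith
  have hs : Real.sqrt (1 - (Real.sqrt 2 / 2) ^ 2) = Real.sqrt 2 / 2 := by
    rw [hr, show (1/2 : ℝ) = (Real.sqrt 2 / 2)^2 by field_simp; nlinarith,
      Real.sqrt_sq (by positivity)]
  refine ⟨Real.sqrt 2 / 2, by positivity, by linarith, 2/5, by norm_num, by linarith, ?_⟩
  rw [hs, div_self (by positivity), min_self, min_self]
  have harc : Real.arccos (Real.sqrt 2 / 2) = Real.pi / 4 := by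
    rw [← Real.cos_pi_div_four, Real.arccos_cos (by positivity) (by linarith [Real.pi_pos])]
  rw [harc]
  have hpi : Real.pi / 4 / 2 < Real.pi / 2 := by linarith [Real.pi_pos]
  have htan : Real.tan (Real.pi / 4 / 2) < 1 := by
    rw [← Real.tan_pi_div_four]
    exact Real.tan_lt_tan_of_nonneg_of_lt_pi_div_two (by positivity)
      (by linarith [Real.pi_pos]) (by linarith [Real.pi_pos])
  nlinarith
end
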